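/- If a function of n regional-change choices is a finite sum of functions each of which is independent of at least one of the choices, then its alternating sum vanishes: for every additive commutative group A, every finite index type ι, and every family g : ι → ((Fin n → Bool) → A) such that for each j : ι there exists a position i with g j w = g j (flip_i w) for all words w (flip_i negating the i-th letter), the function f = Σ_j g j satisfies Σ_{w : Fin n → Bool} (-1)^w f(w) = 0. (This is the combinatorial mechanism behind the observation that if within each of r+1 fixed slices one makes a regional change of any nature to a knot, the order r Kontsevich integral vanishes on the alternating sum of the knots so obtained.) -/
import Mathlib


/-- The sign `(-1)^w` of a word `w : Fin n → Bool`: `(-1)^m` where `m` is the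
number of `true` (i.e. `b`) letters of `w`. -/
def wordSign {n : ℕ} (w : Fin n → Bool) : ℤ :=
  (-1) ^ (Finset.univ.filter fun i => w i = true).card

/-- Negate the `i`-th letter of a word. -/
def flipLetter {n : ℕ} (i : Fin n) (w : Fin n → Bool) : Fin n → Bool :=
  Function.update w i (! w i)

lemma flipLetter_involutive {n : ℕ} (i : Fin n) (w : Fin n → Bool) :
    flipLetter i (flipLetter i w) = w := by
  funext k
  by_cases hk : k = i <;> simp [flipLetter, Function.update, hk]

lemma flipLetter_ne {n : ℕ} (i : Fin n) (w : Fin n → Bool) : flipLetter i w ≠ w := by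
  intro h
  have := congrFun h i
  simp [flipLetter] at this

lemma wordSign_flipLetter {n : ℕ} (i : Fin n) (w : Fin n → Bool) :
    wordSign (flipLetter i w) = - wordSign w := by
  unfold wordSign
  rcases Bool.eq_false_or_eq_true (w i) with h | h
  · have hcard : (Finset.univ.filter fun k => w k = true).card
        = (Finset.univ.filter fun k => flipLetter i w k = true).card + 1 := by
      have : (Finset.univ.filter fun k => w k = true)
          = insert i (Finset.univ.filter fun k => flipLetter i w k = true) := by
        ext k
        by_cases hk : k = i <;> simp [flipLetter, Function.update, hk, h]
      rw [this, Finset.card_insert_of_notMem (by simp [flipLetter, h])]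
    rw [hcard, pow_succ]
    ring
  · have hcard : (Finset.univ.filter fun k => flipLetter i w k = true).card
        = (Finset.univ.filter fun k => w k = true).card + 1 := by
      have : (Finset.univ.filter fun k => flipLetter i w k = true)
          = insert i (Finset.univ.filter fun k => w k = true) := by
        ext k
        by_cases hk : k = i <;> simp [flipLetter, Function.update, hk, h]
      rw [this, Finset.card_insert_of_notMem (by simp [h])]
    rw [hcard, pow_succ]
    ring

/-- If a function of `n` regional-change choices is a finite sum of functions,
each of which is independent of at least one of the choices, then its
alternating sum vanishes.  This is the combinatorial mechanism behind the
vanishing of the order-`r` Kontsevich integral on the alternating sum obtained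
by making a regional change within each of `r+1` fixed slices. -/
theorem alternating_sum_eq_zero_of_sum_indep {A : Type*} [AddCommGroup A]
    {n : ℕ} {ι : Type*} [Fintype ι] (g : ι → ((Fin n → Bool) → A))
    (hg : ∀ j : ι, ∃ i : Fin n, ∀ w : Fin n → Bool, g j w = g j (flipLetter i w)) :
    ∑ w : Fin n → Bool, wordSign w • (∑ j : ι, g j w) = 0 := by
  simp_rw [Finset.smul_sum]
  rw [Finset.sum_comm]
  refine Finset.sum_eq_zero fun j _ => ?_
  obtain ⟨i, hi⟩ := hg j
  refine Finset.sum_ninvolution (flipLetter i) (fun w => ?_)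
    (fun w _ => flipLetter_ne i w) (fun _ => Finset.mem_univ _)
    (flipLetter_involutive i)
  rw [wordSign_flipLetter, ← hi w, neg_smul, add_neg_cancel]
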